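/- The unique shift-invariant measure μ_𝕂 on the Thue-Morse subshift satisfies μ_𝕂((σ∘H)ᵏ(Σ) ∩ 𝕂) = 2^{-k} for every k ≥ 0, hence μ_𝕂 of the difference set (σ∘H)ᵏ(Σ) \ (σ∘H)^{k+1}(Σ) intersected with 𝕂 equals 2^{-(k+1)}. -/
import Mathlib


open Filter Topology MeasureTheory

/-- The left shift on the full 2-shift `Σ = {0,1}^ℕ`. -/
def shift (x : ℕ → Bool) : ℕ → Bool := fun n => x (n + 1)

/-- The Thue–Morse substitution `H : 0 → 01, 1 → 10`, acting on sequences. -/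
def subH (x : ℕ → Bool) : ℕ → Bool :=
  fun n => if n % 2 = 0 then x (n / 2) else !x (n / 2)

/-- The Thue–Morse sequence: `tm n` is the parity of the number of 1s in
the binary expansion of `n`. -/
def tm (n : ℕ) : Bool := (Nat.digits 2 n).count 1 % 2 == 1

/-- The fixed point of `subH` starting with 0. -/
def rho0 : ℕ → Bool := tm

/-- The fixed point of `subH` starting with 1. -/
def rho1 : ℕ → Bool := fun n => !tm n

/-- `rhoB b` is the fixed point of `subH` starting with digit `b`. -/
def rhoB : Bool → ℕ → Bool
  | false => rho0
  | true => rho1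

/-- The digit-flipping involution. -/
def flipSeq (x : ℕ → Bool) : ℕ → Bool := fun n => !x n

/-- Prepend a digit to a sequence. -/
def consTM (a : Bool) (x : ℕ → Bool) : ℕ → Bool
  | 0 => a
  | n + 1 => x n

/-- The Thue–Morse subshift: the closure of the shift orbit of `rho0`. -/
def TMK : Set (ℕ → Bool) := closure {y | ∃ n, y = shift^[n] rho0}

/-- The renormalization operator `𝓡V = V ∘ σ ∘ H + V ∘ H`. -/
def RenOp (V : (ℕ → Bool) → ℝ) : (ℕ → Bool) → ℝ :=
  fun x => V (shift (subH x)) + V (subH x)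

/-- The Birkhoff sum `S_k V = ∑_{i<k} V ∘ σⁱ`. -/
def birkhoff (V : (ℕ → Bool) → ℝ) (k : ℕ) (x : ℕ → Bool) : ℝ :=
  ∑ i ∈ Finset.range k, V (shift^[i] x)

/-- The potential `U_c`: value `c` on `[01]`, `-c` on `[10]`, `0` on `[00] ∪ [11]`. -/
def Upot (c : ℝ) (x : ℕ → Bool) : ℝ :=
  if x 0 = false ∧ x 1 = true then c
  else if x 0 = true ∧ x 1 = false then -c else 0

/-- The sliding block code `π(x)_k = 1` iff `x_k ≠ x_{k+1}`. -/
def piTM (x : ℕ → Bool) : ℕ → Bool := fun n => x n != x (n + 1)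

/-- The Feigenbaum substitution `0 → 11, 1 → 10`, acting on sequences. -/
def subHfeig (x : ℕ → Bool) : ℕ → Bool :=
  fun n => if n % 2 = 0 then true else !x (n / 2)

-- auxiliary lemmas
lemma shift_iterate_apply (n : ℕ) (x : ℕ → Bool) (k : ℕ) :
    shift^[n] x k = x (n + k) := by
  induction n generalizing x with
  | zero => simp
  | succ n ih =>
    rw [Function.iterate_succ_apply, ih]
    show x (n + k + 1) = x (n + 1 + k)
    congr 1; omega

lemma subH_even (x : ℕ → Bool) (m : ℕ) : subH x (2 * m) = x m := by
  show (if 2 * m % 2 = 0 then x (2 * m / 2) else !x (2 * m / 2)) = x m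
  rw [if_pos (by omega : 2 * m % 2 = 0), show 2 * m / 2 = m by omega]

lemma subH_odd (x : ℕ → Bool) (m : ℕ) : subH x (2 * m + 1) = !x m := by
  show (if (2 * m + 1) % 2 = 0 then x ((2 * m + 1) / 2) else !x ((2 * m + 1) / 2)) = !x m
  rw [if_neg (by omega : ¬ (2 * m + 1) % 2 = 0), show (2 * m + 1) / 2 = m by omega]

lemma tm_two_mul (n : ℕ) : tm (2 * n) = tm n := by
  rcases Nat.eq_zero_or_pos n with h | h
  · subst h; rfl
  · unfold tm
    rw [Nat.digits_def' (by norm_num : 1 < 2) (by omega : 0 < 2 * n)]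
    have h1 : 2 * n % 2 = 0 := by omega
    have h2 : 2 * n / 2 = n := by omega
    rw [h1, h2]
    simp

lemma tm_two_mul_add_one (n : ℕ) : tm (2 * n + 1) = !tm n := by
  unfold tm
  rw [Nat.digits_def' (by norm_num : 1 < 2) (by omega : 0 < 2 * n + 1)]
  have h1 : (2 * n + 1) % 2 = 1 := by omega
  have h2 : (2 * n + 1) / 2 = n := by omega
  rw [h1, h2, List.count_cons_self]
  rcases Nat.mod_two_eq_zero_or_one ((Nat.digits 2 n).count 1) with h | h <;>
    simp [Nat.add_mod, h]

lemma tm_no_triple (n : ℕ) : ¬ (tm n = tm (n + 1) ∧ tm (n + 1) = tm (n + 2)) := by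
  rintro ⟨h1, h2⟩
  rcases Nat.even_or_odd n with ⟨m, hm⟩ | ⟨m, hm⟩
  · have hn : n = 2 * m := by omega
    subst hn
    rw [tm_two_mul, tm_two_mul_add_one] at h1
    cases tm m <;> simp_all
  · have hn : n = 2 * m + 1 := by omega
    subst hn
    rw [show 2 * m + 1 + 1 = 2 * (m + 1) by ring, show 2 * m + 1 + 2 = 2 * (m + 1) + 1 by ring,
      tm_two_mul, tm_two_mul_add_one] at h2
    cases tm (m + 1) <;> simp_all

lemma subH_rho0 : subH rho0 = rho0 := by
  funext n
  rcases Nat.even_or_odd n with ⟨m, hm⟩ | ⟨m, hm⟩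
  · have hn : n = 2 * m := by omega
    subst hn
    rw [subH_even]
    exact (tm_two_mul m).symm
  · have hn : n = 2 * m + 1 := by omega
    subst hn
    rw [subH_odd]
    exact (tm_two_mul_add_one m).symm

lemma subH_orbit (n : ℕ) : subH (shift^[n] rho0) = shift^[2 * n] rho0 := by
  funext k
  rw [shift_iterate_apply]
  rcases Nat.even_or_odd k with ⟨m, hm⟩ | ⟨m, hm⟩
  · have hk : k = 2 * m := by omega
    subst hk
    rw [subH_even, shift_iterate_apply]
    show tm (n + m) = tm (2 * n + 2 * m)
    rw [show 2 * n + 2 * m = 2 * (n + m) by ring]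
    exact (tm_two_mul (n + m)).symm
  · have hk : k = 2 * m + 1 := by omega
    subst hk
    rw [subH_odd, shift_iterate_apply]
    show (!tm (n + m)) = tm (2 * n + (2 * m + 1))
    rw [show 2 * n + (2 * m + 1) = 2 * (n + m) + 1 by ring]
    exact (tm_two_mul_add_one (n + m)).symm

lemma continuous_shift : Continuous shift :=
  continuous_pi fun n => continuous_apply (n + 1)

lemma continuous_subH : Continuous subH := by
  apply continuous_pi
  intro n
  by_cases h : n % 2 = 0 <;> simp only [subH, h, if_true, if_false]
  · exact continuous_apply _
  · exact (continuous_of_discreteTopology (f := Bool.not)).comp (continuous_apply _)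

lemma shift_mem_TMK {x : ℕ → Bool} (hx : x ∈ TMK) : shift x ∈ TMK :=
  map_mem_closure continuous_shift hx
    (by rintro y ⟨n, rfl⟩; exact ⟨n + 1, (Function.iterate_succ_apply' _ _ _).symm⟩)

lemma subH_mem_TMK {x : ℕ → Bool} (hx : x ∈ TMK) : subH x ∈ TMK :=
  map_mem_closure continuous_subH hx
    (by rintro y ⟨n, rfl⟩; exact ⟨2 * n, subH_orbit n⟩)

lemma T_inj : Function.Injective (shift ∘ subH) := by
  intro x y h
  funext m
  have hm := congrFun h (2 * m)
  have key : ∀ w : ℕ → Bool, (shift ∘ subH) w (2 * m) = !w m := by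
    intro w
    show subH w (2 * m + 1) = !w m
    exact subH_odd w m
  rw [key x, key y] at hm
  exact Bool.not_inj hm

lemma range_T_const {x : ℕ → Bool} (hx : subH x ∈ Set.range (shift ∘ subH)) :
    ∀ m, x (m + 1) = x m := by
  obtain ⟨z, hz⟩ := hx
  intro m
  have e2 := congrFun hz (2 * m + 1)
  have e3 := congrFun hz (2 * m + 2)
  have l2 : (shift ∘ subH) z (2 * m + 1) = z (m + 1) := by
    show subH z (2 * m + 1 + 1) = z (m + 1)
    rw [show 2 * m + 1 + 1 = 2 * (m + 1) by ring, subH_even]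
  have l3 : (shift ∘ subH) z (2 * m + 2) = !z (m + 1) := by
    show subH z (2 * m + 2 + 1) = !z (m + 1)
    rw [show 2 * m + 2 + 1 = 2 * (m + 1) + 1 by ring, subH_odd]
  have r2 : subH x (2 * m + 1) = !x m := subH_odd x m
  have r3 : subH x (2 * m + 2) = x (m + 1) := by
    rw [show 2 * m + 2 = 2 * (m + 1) by ring, subH_even]
  rw [l2, r2] at e2
  rw [l3, r3] at e3
  rw [← e3, e2, Bool.not_not]

lemma const_notMem_TMK (x : ℕ → Bool) (hc : ∀ m, x (m + 1) = x m) : x ∉ TMK := by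
  intro hx
  have hU : IsOpen {z : ℕ → Bool | z 0 = x 0 ∧ z 1 = x 0 ∧ z 2 = x 0} := by
    have he : {z : ℕ → Bool | z 0 = x 0 ∧ z 1 = x 0 ∧ z 2 = x 0}
        = ((fun z : ℕ → Bool => z 0) ⁻¹' {x 0}) ∩
          (((fun z : ℕ → Bool => z 1) ⁻¹' {x 0}) ∩ ((fun z : ℕ → Bool => z 2) ⁻¹' {x 0})) := by
      ext z; simp [Set.mem_preimage]
    rw [he]
    exact ((isOpen_discrete _).preimage (continuous_apply 0)).inter
      (((isOpen_discrete _).preimage (continuous_apply 1)).inter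
        ((isOpen_discrete _).preimage (continuous_apply 2)))
  have hxU : x ∈ {z : ℕ → Bool | z 0 = x 0 ∧ z 1 = x 0 ∧ z 2 = x 0} := by
    refine ⟨rfl, hc 0, ?_⟩
    rw [show (2 : ℕ) = 1 + 1 from rfl, hc 1, hc 0]
  obtain ⟨y, hyU, ⟨n, rfl⟩⟩ := mem_closure_iff.mp hx _ hU hxU
  obtain ⟨g0, g1, g2⟩ := hyU
  rw [shift_iterate_apply] at g0 g1 g2
  have t0 : tm n = x 0 := by have h := g0; rwa [Nat.add_zero] at h
  have t1 : tm (n + 1) = x 0 := g1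
  have t2 : tm (n + 2) = x 0 := g2
  exact tm_no_triple n ⟨t0.trans t1.symm, t1.trans t2.symm⟩

/-- the unique invariant measure `μ` of the Thue–Morse subshift
satisfies `μ((σ∘H)ᵏ(Σ) ∩ 𝕂) = 2^{-k}` and
`μ(((σ∘H)ᵏ(Σ) \ (σ∘H)^{k+1}(Σ)) ∩ 𝕂) = 2^{-(k+1)}` for all `k ≥ 0`. -/
theorem stmt15 (mu : Measure (ℕ → Bool)) [IsProbabilityMeasure mu]
    (hinv : MeasurePreserving shift mu mu) (hK : mu TMK = 1)
    (huniq : ∀ nu : Measure (ℕ → Bool), IsProbabilityMeasure nu →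
      MeasurePreserving shift nu nu → nu TMK = 1 → nu = mu) :
    ∀ k : ℕ,
      mu (Set.range ((shift ∘ subH)^[k]) ∩ TMK) = 1 / 2 ^ k ∧
      mu ((Set.range ((shift ∘ subH)^[k]) \ Set.range ((shift ∘ subH)^[k + 1])) ∩ TMK)
        = 1 / 2 ^ (k + 1) := by
  have hTc : Continuous (shift ∘ subH) := continuous_shift.comp continuous_subH
  have hTm : Measurable (shift ∘ subH) := hTc.measurable
  have hHm : Measurable subH := continuous_subH.measurable
  have hSm : Measurable shift := continuous_shift.measurable
  have hKm : MeasurableSet TMK := isClosed_closure.measurableSet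
  have hKc : mu TMKᶜ = 0 := by
    have h := measure_compl hKm (measure_ne_top mu TMK)
    rw [hK, measure_univ] at h
    simpa using h
  have hrestr : ∀ s : Set (ℕ → Bool), mu s = mu (s ∩ TMK) := by
    intro s
    refine le_antisymm ?_ (measure_mono Set.inter_subset_left)
    calc mu s ≤ mu ((s ∩ TMK) ∪ TMKᶜ) := by
          apply measure_mono
          intro x hx
          by_cases h : x ∈ TMK
          · exact Or.inl ⟨hx, h⟩
          · exact Or.inr h
      _ ≤ mu (s ∩ TMK) + mu TMKᶜ := measure_union_le _ _
      _ = mu (s ∩ TMK) := by rw [hKc, add_zero]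
  have hTkc : ∀ k : ℕ, Continuous ((shift ∘ subH)^[k]) := by
    intro k
    induction k with
    | zero => simpa using continuous_id
    | succ k ih => rw [Function.iterate_succ]; exact ih.comp hTc
  have hRm : ∀ k : ℕ, MeasurableSet (Set.range ((shift ∘ subH)^[k])) := fun k =>
    (isCompact_range (hTkc k)).isClosed.measurableSet
  set nu : Measure (ℕ → Bool) :=
    (2 : ENNReal)⁻¹ • (Measure.map (shift ∘ subH) mu + Measure.map subH mu) with hnudef
  have nu_apply : ∀ s : Set (ℕ → Bool), MeasurableSet s →
      nu s = 2⁻¹ * (mu ((shift ∘ subH) ⁻¹' s) + mu (subH ⁻¹' s)) := by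
    intro s hs
    rw [hnudef, Measure.smul_apply, Measure.add_apply, Measure.map_apply hTm hs,
      Measure.map_apply hHm hs, smul_eq_mul]
  have halfsum : (2 : ENNReal)⁻¹ * (1 + 1) = 1 := by
    rw [one_add_one_eq_two, ENNReal.inv_mul_cancel two_ne_zero ENNReal.ofNat_ne_top]
  have hnu_prob : IsProbabilityMeasure nu := by
    constructor
    rw [nu_apply Set.univ MeasurableSet.univ]
    simp only [Set.preimage_univ, measure_univ]
    exact halfsum
  have hcomm : shift ∘ (shift ∘ subH) = subH ∘ shift := by
    funext x n
    show subH x (n + 1 + 1) = subH (shift x) n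
    rcases Nat.even_or_odd n with ⟨m, hm⟩ | ⟨m, hm⟩
    · have hn : n = 2 * m := by omega
      subst hn
      rw [show 2 * m + 1 + 1 = 2 * (m + 1) by ring, subH_even, subH_even]
      rfl
    · have hn : n = 2 * m + 1 := by omega
      subst hn
      rw [show 2 * m + 1 + 1 + 1 = 2 * (m + 1) + 1 by ring, subH_odd, subH_odd]
      rfl
  have hnu_pres : MeasurePreserving shift nu nu := by
    refine ⟨hSm, ?_⟩
    rw [hnudef, Measure.map_smul, Measure.map_add _ _ hSm, Measure.map_map hSm hTm,
      Measure.map_map hSm hHm, hcomm, ← Measure.map_map hHm hSm, hinv.map_eq,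
      add_comm (Measure.map subH mu)]
  have hTK : ∀ x ∈ TMK, (shift ∘ subH) x ∈ TMK := fun x hx => shift_mem_TMK (subH_mem_TMK hx)
  have hnuK : nu TMK = 1 := by
    rw [nu_apply TMK hKm]
    have h1 : mu ((shift ∘ subH) ⁻¹' TMK) = 1 :=
      le_antisymm prob_le_one (by rw [← hK]; exact measure_mono fun x hx => hTK x hx)
    have h2 : mu (subH ⁻¹' TMK) = 1 :=
      le_antisymm prob_le_one (by rw [← hK]; exact measure_mono fun x hx => subH_mem_TMK hx)
    rw [h1, h2]
    exact halfsum
  have hEq : nu = mu := huniq nu hnu_prob hnu_pres hnuK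
  have key : ∀ s : Set (ℕ → Bool), MeasurableSet s →
      mu s = 2⁻¹ * (mu ((shift ∘ subH) ⁻¹' s) + mu (subH ⁻¹' s)) := by
    intro s hs
    have h := nu_apply s hs
    rwa [hEq] at h
  have halfpow : ∀ k : ℕ, (2 : ENNReal)⁻¹ * (1 / 2 ^ k) = 1 / 2 ^ (k + 1) := by
    intro k
    rw [one_div, one_div, ENNReal.inv_pow, ENNReal.inv_pow, pow_succ, mul_comm]
  have main : ∀ k : ℕ, mu (Set.range ((shift ∘ subH)^[k]) ∩ TMK) = 1 / 2 ^ k := by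
    intro k
    induction k with
    | zero =>
      rw [Function.iterate_zero, Set.range_id, Set.univ_inter, hK]
      simp
    | succ k ih =>
      have hs : MeasurableSet (Set.range ((shift ∘ subH)^[k + 1]) ∩ TMK) :=
        (hRm (k + 1)).inter hKm
      rw [key _ hs]
      have h1 : mu ((shift ∘ subH) ⁻¹' (Set.range ((shift ∘ subH)^[k + 1]) ∩ TMK))
          = mu (Set.range ((shift ∘ subH)^[k]) ∩ TMK) := by
        rw [hrestr ((shift ∘ subH) ⁻¹' (Set.range ((shift ∘ subH)^[k + 1]) ∩ TMK))]
        congr 1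
        ext x
        simp only [Set.mem_inter_iff, Set.mem_preimage, Set.mem_range]
        constructor
        · rintro ⟨⟨⟨z, hz⟩, -⟩, hxK⟩
          refine ⟨⟨z, ?_⟩, hxK⟩
          apply T_inj
          rw [← Function.iterate_succ_apply' (shift ∘ subH) k z]
          exact hz
        · rintro ⟨⟨z, hz⟩, hxK⟩
          refine ⟨⟨⟨z, ?_⟩, hTK x hxK⟩, hxK⟩
          rw [Function.iterate_succ_apply', hz]
      have h2 : mu (subH ⁻¹' (Set.range ((shift ∘ subH)^[k + 1]) ∩ TMK)) = 0 := by
        rw [hrestr (subH ⁻¹' (Set.range ((shift ∘ subH)^[k + 1]) ∩ TMK))]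
        have he : subH ⁻¹' (Set.range ((shift ∘ subH)^[k + 1]) ∩ TMK) ∩ TMK = ∅ := by
          ext x
          simp only [Set.mem_inter_iff, Set.mem_preimage, Set.mem_range,
            Set.mem_empty_iff_false, iff_false]
          rintro ⟨⟨⟨z, hz⟩, -⟩, hxK⟩
          have hr : subH x ∈ Set.range (shift ∘ subH) := by
            refine ⟨(shift ∘ subH)^[k] z, ?_⟩
            rw [← Function.iterate_succ_apply' (shift ∘ subH) k z]
            exact hz
          exact const_notMem_TMK x (range_T_const hr) hxK
        rw [he]
        exact measure_empty
      rw [h1, h2, ih, add_zero, halfpow]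
  intro k
  refine ⟨main k, ?_⟩
  have hsub : Set.range ((shift ∘ subH)^[k + 1]) ∩ TMK
      ⊆ Set.range ((shift ∘ subH)^[k]) ∩ TMK := by
    apply Set.inter_subset_inter_left
    rw [Function.iterate_succ]
    exact Set.range_comp_subset_range _ _
  have hdiff : (Set.range ((shift ∘ subH)^[k]) \ Set.range ((shift ∘ subH)^[k + 1])) ∩ TMK
      = (Set.range ((shift ∘ subH)^[k]) ∩ TMK) \ (Set.range ((shift ∘ subH)^[k + 1]) ∩ TMK) := by
    ext x
    simp only [Set.mem_inter_iff, Set.mem_diff]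
    tauto
  rw [hdiff, measure_diff hsub ((hRm (k + 1)).inter hKm).nullMeasurableSet
    (measure_ne_top mu _), main k, main (k + 1)]
  have hne : (1 : ENNReal) / 2 ^ (k + 1) ≠ ⊤ := by
    rw [one_div]
    exact ENNReal.inv_ne_top.mpr (pow_ne_zero _ two_ne_zero)
  apply ENNReal.sub_eq_of_eq_add hne
  rw [← halfpow k, ← two_mul, ← mul_assoc,
    ENNReal.mul_inv_cancel two_ne_zero ENNReal.ofNat_ne_top, one_mul]
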